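/- Let X be an infinite topological space such that: (a) every open subset of X is empty or has finite complement in X; (b) any two open subsets of X are comparable under inclusion; and (c) for every natural number s there is a nonempty open subset of X whose complement in X has cardinality exactly s. Then X has a countably infinite subset whose subspace topology is homeomorphic to ℕ equipped with the final segment topology. -/

import Mathlib

/-- The final segment topology on ℕ: generated by the sets `Set.Ici n`;
its open sets are exactly `∅`, `ℕ`, and the intervals `[n,∞)`. -/
def finalSegTop : TopologicalSpace ℕ :=
  TopologicalSpace.generateFrom {s | ∃ n : ℕ, s = Set.Ici n}

/-- If `X` is an infinite topological space such that (a) every open set is empty or has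
finite complement; (b) any two open sets are comparable under inclusion; and (c) for
every `s : ℕ` there is a nonempty open set whose complement has cardinality exactly `s`,
then `X` has a countably infinite subset whose subspace topology is homeomorphic to ℕ
with the final segment topology. -/
theorem weak_final_segment_subspace {X : Type*} [TopologicalSpace X] [Infinite X]
    (ha : ∀ U : Set X, IsOpen U → U = ∅ ∨ Uᶜ.Finite)
    (hb : ∀ U V : Set X, IsOpen U → IsOpen V → U ⊆ V ∨ V ⊆ U)
    (hc : ∀ s : ℕ, ∃ U : Set X, IsOpen U ∧ U.Nonempty ∧ Uᶜ.Finite ∧ Uᶜ.ncard = s) :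
    ∃ Y : Set X, Y.Countable ∧ Y.Infinite ∧
      Nonempty (@Homeomorph Y ℕ _ finalSegTop) := by
  classical
  choose U hUo hUne hUfin hUcard using hc
  -- monotonicity of complements
  have hmono : ∀ m n : ℕ, m ≤ n → (U m)ᶜ ⊆ (U n)ᶜ := by
    intro m n hmn
    rcases hb (U n) (U m) (hUo n) (hUo m) with h | h
    · exact Set.compl_subset_compl.mpr h
    · have h1 : n ≤ m := by
        have := Set.ncard_le_ncard (Set.compl_subset_compl.mpr h) (hUfin m)
        simpa [hUcard] using this
      have : m = n := le_antisymm hmn h1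
      subst this; exact subset_rfl
  -- pick points
  have hx : ∀ n : ℕ, ∃ y, y ∈ (U (n + 1))ᶜ \ (U n)ᶜ := by
    intro n
    have hss : (U n)ᶜ ⊂ (U (n + 1))ᶜ := by
      refine (hmono n (n + 1) (Nat.le_succ n)).ssubset_of_ne ?_
      intro h
      have h1 := hUcard n
      rw [h, hUcard (n + 1)] at h1
      omega
    exact Set.exists_of_ssubset hss
  choose x hx1 using hx
  have hmem : ∀ k n : ℕ, x k ∈ U n ↔ n ≤ k := by
    intro k n
    constructor
    · intro h
      by_contra hlt
      push_neg at hlt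
      exact hmono (k + 1) n hlt (hx1 k).1 h
    · intro hnk
      by_contra h
      exact (hx1 k).2 (hmono n k hnk h)
  have hinj : Function.Injective x := by
    intro a b hab
    have h1 : a ≤ b := (hmem b a).mp (hab ▸ (hmem a a).mpr le_rfl)
    have h2 : b ≤ a := (hmem a b).mp (hab ▸ (hmem b b).mpr le_rfl)
    omega
  -- every nonempty open set is some `U m`
  have hUeq : ∀ V : Set X, IsOpen V → V.Nonempty → V = U (Vᶜ.ncard) := by
    intro V hVo hVne
    have hVfin : Vᶜ.Finite := by
      rcases ha V hVo with h | h
      · exact absurd h (Set.nonempty_iff_ne_empty.mp hVne)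
      · exact h
    set m := Vᶜ.ncard with hm
    have hcc : Vᶜ = (U m)ᶜ := by
      rcases hb V (U m) hVo (hUo m) with h | h
      · exact (Set.eq_of_subset_of_ncard_le (Set.compl_subset_compl.mpr h)
          (by rw [hUcard]) hVfin).symm
      · exact Set.eq_of_subset_of_ncard_le (Set.compl_subset_compl.mpr h)
          (by rw [hUcard]) (hUfin m)
    exact compl_injective hcc
  refine ⟨Set.range x, Set.countable_range x, Set.infinite_range_of_injective hinj, ?_⟩
  set e : ℕ ≃ Set.range x := Equiv.ofInjective x hinj with he
  have hval : ∀ k : ℕ, ((e k : Set.range x) : X) = x k := fun k => rfl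
  have hcont : @Continuous _ _ _ finalSegTop (e.symm : Set.range x → ℕ) := by
    rw [show finalSegTop = TopologicalSpace.generateFrom {s | ∃ n : ℕ, s = Set.Ici n} from rfl,
      continuous_generateFrom_iff]
    rintro s ⟨n, rfl⟩
    have : (e.symm : Set.range x → ℕ) ⁻¹' Set.Ici n =
        Subtype.val ⁻¹' (U n) := by
      ext y
      have hy : (y : X) = x (e.symm y) := by
        conv_lhs => rw [← e.apply_symm_apply y]
        exact hval _
      simp only [Set.mem_preimage, Set.mem_Ici]
      rw [hy, hmem]
    rw [this]
    exact (hUo n).preimage continuous_subtype_val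
  have hopen : @IsOpenMap _ _ _ finalSegTop (e.symm : Set.range x → ℕ) := by
    intro V hV
    rcases isOpen_induced_iff.mp hV with ⟨W, hWo, rfl⟩
    have himg : (e.symm : Set.range x → ℕ) '' (Subtype.val ⁻¹' W) =
        {k : ℕ | x k ∈ W} := by
      ext k
      constructor
      · rintro ⟨y, hy, rfl⟩
        have hyk : (y : X) = x (e.symm y) := by
          conv_lhs => rw [← e.apply_symm_apply y]
          exact hval _
        rw [Set.mem_preimage, hyk] at hy
        exact hy
      · intro hk
        exact ⟨e k, by simpa [hval] using hk, e.symm_apply_apply k⟩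
    rw [himg]
    rcases W.eq_empty_or_nonempty with rfl | hWne
    · simpa using @isOpen_empty ℕ finalSegTop
    · obtain ⟨m, hW⟩ : ∃ m, W = U m := ⟨Wᶜ.ncard, hUeq W hWo hWne⟩
      have hset : {k : ℕ | x k ∈ W} = Set.Ici m := by
        ext k
        rw [Set.mem_setOf_eq, hW, hmem]
        rfl
      rw [hset]
      exact TopologicalSpace.isOpen_generateFrom_of_mem ⟨m, rfl⟩
  exact ⟨@Equiv.toHomeomorphOfContinuousOpen _ _ _ finalSegTop e.symm hcont hopen⟩
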